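/- For all a, b, c, d ∈ ℂ one has M(c,d)⁻¹ · M(a,b) · M(c,d) = M(a − acd + bc², b − ad² + bcd), where M(x,y) = [[1 − xy, −y²],[x², 1 + xy]] (note det M(c,d) = 1, so M(c,d) is invertible). Equivalently, M(a,b) · M(c,d) = M(c,d) · M(a − acd + bc², b − ad² + bcd). Hence, under the identification of the conjugacy class of C = [[1,0],[1,1]] in SL(2,ℂ) with (ℂ² ∖ {0})/±, the conjugation quandle operation becomes [a,b] ⋆ [c,d] = [a − acd + bc², b − ad² + bcd]. -/
import Mathlib


/-- For all `a, b, c, d ∈ ℂ` and `M(x,y) = [[1 − xy, −y²],[x², 1 + xy]]`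
(which has determinant `1`, hence is invertible), one has
`M(c,d)⁻¹ · M(a,b) · M(c,d) = M(a − acd + bc², b − ad² + bcd)`, equivalently
`M(a,b) · M(c,d) = M(c,d) · M(a − acd + bc², b − ad² + bcd)`. Hence under the
identification of the conjugacy class of `C = [[1,0],[1,1]]` in `SL(2,ℂ)` with
`(ℂ² ∖ {0})/±`, the conjugation quandle operation becomes
`[a,b] ⋆ [c,d] = [a − acd + bc², b − ad² + bcd]`. -/
theorem M_conjugation_formula (M : ℂ → ℂ → Matrix (Fin 2) (Fin 2) ℂ)
    (hM : ∀ x y : ℂ, M x y = !![1 - x * y, -y ^ 2; x ^ 2, 1 + x * y])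
    (a b c d : ℂ) :
    (M c d).det = 1 ∧
    M a b * M c d =
      M c d * M (a - a * c * d + b * c ^ 2) (b - a * d ^ 2 + b * c * d) ∧
    (M c d)⁻¹ * M a b * M c d =
      M (a - a * c * d + b * c ^ 2) (b - a * d ^ 2 + b * c * d) := by
  have hdet : (M c d).det = 1 := by
    rw [hM]; simp [Matrix.det_fin_two_of]; ring
  have hmul : M a b * M c d =
      M c d * M (a - a * c * d + b * c ^ 2) (b - a * d ^ 2 + b * c * d) := by
    simp only [hM]
    ext i j
    fin_cases i <;> fin_cases j <;>
      simp [Matrix.mul_apply, Fin.sum_univ_two] <;> ring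
  refine ⟨hdet, hmul, ?_⟩
  have hinv : (M c d)⁻¹ * M c d = 1 :=
    Matrix.nonsing_inv_mul _ (by simp [hdet])
  rw [mul_assoc, hmul, ← mul_assoc, hinv, one_mul]
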